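/- arXiv:1102.2586 — 5 statements merged into one kernel-verified Lean document; each statement's English description precedes it below -/
import Mathlib

section
/- Let X be a locally compact topological space containing a dense open subset O that is Hausdorff (in the subspace topology). Suppose every nonempty open subset of X contains a closed subset of X with nonempty interior. Then X is quasi-completely regular: for every nonempty open set U ⊆ X there is a continuous real-valued function on X that is not identically zero and vanishes identically on X \ U. -/
/-- A topological space is quasi-completely regular if for every nonempty open set `U`
there is a continuous real-valued function, not identically zero, vanishing off `U`. -/
def QuasiCompletelyRegular (X : Type*) [TopologicalSpace X] : Prop :=
  ∀ U : Set X, IsOpen U → U.Nonempty →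
    ∃ f : C(X, ℝ), f ≠ 0 ∧ ∀ x ∈ Uᶜ, f x = 0

theorem stmt0 {X : Type*} [TopologicalSpace X] [LocallyCompactSpace X]
    (O : Set X) (hO : IsOpen O) (hOdense : Dense O) (hOT2 : T2Space O)
    (h : ∀ U : Set X, IsOpen U → U.Nonempty →
      ∃ F : Set X, F ⊆ U ∧ IsClosed F ∧ (interior F).Nonempty) :
    QuasiCompletelyRegular X := by
  classical
  intro U hU hUne
  -- U ∩ O is open and nonempty
  have hVopen : IsOpen (U ∩ O) := hU.inter hO
  have hVne : (U ∩ O).Nonempty := hOdense.inter_open_nonempty U hU hUne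
  obtain ⟨F₁, hF₁sub, hF₁closed, hF₁int⟩ := h (U ∩ O) hVopen hVne
  obtain ⟨F₂, hF₂sub, hF₂closed, hF₂int⟩ := h (interior F₁) isOpen_interior hF₁int
  have hF₂O : F₂ ⊆ O := hF₂sub.trans (interior_subset.trans (hF₁sub.trans Set.inter_subset_right))
  have hF₂U : F₂ ⊆ U := hF₂sub.trans (interior_subset.trans (hF₁sub.trans Set.inter_subset_left))
  -- pass to the subspace O
  haveI : LocallyCompactSpace O := hO.locallyCompactSpace
  obtain ⟨x₀, hx₀⟩ := hF₂int
  have hx₀O : x₀ ∈ O := hF₂O (interior_subset hx₀)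
  set W : Set O := (Subtype.val : O → X) ⁻¹' (interior F₂) with hW
  have hWopen : IsOpen W := isOpen_interior.preimage continuous_subtype_val
  have hx₀W : (⟨x₀, hx₀O⟩ : O) ∈ W := hx₀
  obtain ⟨f, hf1, hf0, -, -⟩ :=
    exists_continuous_one_zero_of_isCompact (isCompact_singleton (x := (⟨x₀, hx₀O⟩ : O)))
      hWopen.isClosed_compl (by simpa using hx₀W)
  -- extend by zero
  set g : X → ℝ := fun x => if hx : x ∈ O then f ⟨x, hx⟩ else 0 with hg
  have hgO : ∀ (x : X) (hx : x ∈ O), g x = f ⟨x, hx⟩ := fun x hx => dif_pos hx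
  have hg_zero : ∀ x ∉ F₂, g x = 0 := by
    intro x hx
    by_cases hxO : x ∈ O
    · rw [hgO x hxO]
      refine hf0 ?_
      simp only [Set.mem_compl_iff, hW, Set.mem_preimage]
      exact fun hmem => hx (interior_subset hmem)
    · exact dif_neg hxO
  have hcontO : ContinuousOn g O := by
    intro y hy
    rw [show ContinuousWithinAt g O y ↔ ContinuousAt (O.restrict g) ⟨y, hy⟩ from
      continuousWithinAt_iff_continuousAt_restrict g hy]
    have hres : O.restrict g = fun p : O => f p := funext fun p => hgO p.1 p.2
    rw [hres]
    exact f.continuous.continuousAt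
  have hgcont : Continuous g := by
    rw [continuous_iff_continuousAt]
    intro x
    by_cases hxO : x ∈ O
    · exact hcontO.continuousAt (hO.mem_nhds hxO)
    · have hx : x ∈ F₂ᶜ := fun hmem => hxO (hF₂O hmem)
      have hev : ∀ᶠ y in nhds x, g y = 0 :=
        Filter.eventually_of_mem (hF₂closed.isOpen_compl.mem_nhds hx) hg_zero
      have hg0 : g x = 0 := hg_zero x hx
      rw [ContinuousAt, hg0]
      exact Filter.Tendsto.congr' (hev.mono fun y hy => hy.symm) tendsto_const_nhds
  refine ⟨⟨g, hgcont⟩, ?_, ?_⟩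
  · intro hzero
    have : g x₀ = 1 := by
      rw [hgO x₀ hx₀O]
      simpa using hf1 (Set.mem_singleton _)
    rw [show g x₀ = (0 : C(X, ℝ)) x₀ from congrFun (congrArg DFunLike.coe hzero) x₀] at this
    simp at this
  · intro x hx
    exact hg_zero x fun hmem => hx (hF₂U hmem)
end

section
/- In a ring A, every primal ideal contains a minimal primal ideal: the set of primal ideals contained in a given primal ideal I, ordered by inclusion, has a minimal element. -/
/-- A two-sided ideal `I` of a ring `A` is primal if whenever ideals `I₁, …, Iₙ` (`n ≥ 2`)
have product `{0}` (equivalently, every product of elements `x₁ ⋯ xₙ` with `xᵢ ∈ Iᵢ`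
vanishes), then `Iₖ ⊆ I` for some `k`. -/
def IsPrimalIdeal {A : Type*} [NonUnitalRing A] (I : TwoSidedIdeal A) : Prop :=
  ∀ L : List (TwoSidedIdeal A), 2 ≤ L.length →
    (∀ (x : A) (xs : List A), List.Forall₂ (fun y J => y ∈ J) (x :: xs) L →
      xs.foldl (· * ·) x = 0) →
    ∃ J ∈ L, J ≤ I

/-- Zorn's lemma, minimal-element form. -/
lemma zorn_min_aux {α : Type*} [Preorder α] (s : Set α)
    (ih : ∀ c ⊆ s, IsChain (· ≤ ·) c → ∀ y ∈ c, ∃ lb ∈ s, ∀ z ∈ c, lb ≤ z)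
    (x : α) (hxs : x ∈ s) :
    ∃ m, m ≤ x ∧ m ∈ s ∧ ∀ z ∈ s, z ≤ m → m ≤ z := by
  obtain ⟨m, hxm, hms⟩ := zorn_le_nonempty₀ (α := αᵒᵈ) (OrderDual.ofDual ⁻¹' s)
    (by
      intro c hcs hc y hy
      have hc' : IsChain (· ≤ ·) (OrderDual.ofDual '' c) := by
        rintro a ⟨a', ha', rfl⟩ b ⟨b', hb', rfl⟩ hab
        exact (hc ha' hb' (fun h => hab (congrArg _ h))).symm
      obtain ⟨lb, hlbs, hlb⟩ := ih (OrderDual.ofDual '' c)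
        (by rintro a ⟨a', ha', rfl⟩; exact hcs ha') hc'
        (OrderDual.ofDual y) ⟨y, hy, rfl⟩
      exact ⟨OrderDual.toDual lb, hlbs, fun z hz => hlb _ ⟨z, hz, rfl⟩⟩)
    (OrderDual.toDual x) hxs
  exact ⟨OrderDual.ofDual m, hxm, hms.1, fun z hz hzm => hms.2 hz hzm⟩

/-- In a chain, every nonempty finite list has a minimum. -/
lemma chain_list_min {α : Type*} [Preorder α] {s : Set α} (hs : IsChain (· ≤ ·) s) :
    ∀ l : List α, (∀ c ∈ l, c ∈ s) → l ≠ [] → ∃ c ∈ l, ∀ c' ∈ l, c ≤ c' := by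
  intro l
  induction l with
  | nil => intro _ h; exact absurd rfl h
  | cons a t ih =>
    intro hmem _
    rcases eq_or_ne t [] with rfl | ht
    · exact ⟨a, List.mem_cons_self .., fun c' hc' => by
        simp only [List.mem_singleton] at hc'; subst hc'; exact le_refl _⟩
    obtain ⟨c, hct, hcmin⟩ := ih (fun c hc => hmem c (List.mem_cons_of_mem _ hc)) ht
    have ha : a ∈ s := hmem a (List.mem_cons_self ..)
    have hc : c ∈ s := hmem c (List.mem_cons_of_mem _ hct)
    rcases eq_or_ne a c with rfl | hne
    · exact ⟨a, List.mem_cons_self .., fun c' hc' => by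
        rcases List.mem_cons.1 hc' with rfl | h
        · exact le_refl _
        · exact hcmin _ h⟩
    rcases hs ha hc hne with h | h
    · exact ⟨a, List.mem_cons_self .., fun c' hc' => by
        rcases List.mem_cons.1 hc' with rfl | h'
        · exact le_refl _
        · exact h.trans (hcmin _ h')⟩
    · exact ⟨c, List.mem_cons_of_mem _ hct, fun c' hc' => by
        rcases List.mem_cons.1 hc' with rfl | h'
        · exact h
        · exact hcmin _ h'⟩

/-- The infimum of a nonempty chain of primal ideals is primal. -/
lemma sInf_chain_primal {A : Type*} [NonUnitalRing A] {s : Set (TwoSidedIdeal A)}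
    (hs : IsChain (· ≤ ·) s) (hne : s.Nonempty) (hp : ∀ J ∈ s, IsPrimalIdeal J) :
    IsPrimalIdeal (sInf s) := by
  intro L hlen hprod
  by_contra hcon
  push_neg at hcon
  have h : ∀ J, ∃ C, J ∈ L → C ∈ s ∧ ¬ J ≤ C := by
    intro J
    rcases Classical.em (∃ C ∈ s, ¬ J ≤ C) with ⟨C, hCs, hJC⟩ | hC
    · exact ⟨C, fun _ => ⟨hCs, hJC⟩⟩
    · push_neg at hC
      by_cases hJ : J ∈ L
      · exact ⟨hne.choose, fun _ => False.elim (hcon J hJ (le_sInf fun C hCs => hC C hCs))⟩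
      · exact ⟨hne.choose, fun h => absurd h hJ⟩
  choose C hC using h
  have hLne : L ≠ [] := by
    intro h; rw [h] at hlen; simp at hlen
  obtain ⟨c0, hc0mem, hc0min⟩ := chain_list_min hs (L.map C)
      (by
        intro c hc
        obtain ⟨J, hJ, rfl⟩ := List.mem_map.1 hc
        exact (hC J hJ).1)
      (by simpa using hLne)
  obtain ⟨J0, hJ0, rfl⟩ := List.mem_map.1 hc0mem
  obtain ⟨J, hJL, hJle⟩ := hp _ (hC J0 hJ0).1 L hlen hprod
  exact (hC J hJL).2 (hJle.trans (hc0min _ (List.mem_map_of_mem (f := C) hJL)))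

/-- Every primal ideal contains a minimal primal ideal: the set of primal ideals
contained in a given primal ideal `I`, ordered by inclusion, has a minimal element. -/
theorem stmt6 {A : Type*} [NonUnitalRing A] (I : TwoSidedIdeal A)
    (hI : IsPrimalIdeal I) :
    ∃ M : TwoSidedIdeal A, IsPrimalIdeal M ∧ M ≤ I ∧
      ∀ J : TwoSidedIdeal A, IsPrimalIdeal J → J ≤ M → J = M := by
  obtain ⟨M, hMI, hMS, hMmin⟩ := zorn_min_aux {J : TwoSidedIdeal A | IsPrimalIdeal J ∧ J ≤ I}
    (by
      intro c hcS hc y hy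
      exact ⟨sInf c, ⟨sInf_chain_primal hc ⟨y, hy⟩ (fun J hJ => (hcS hJ).1),
        (sInf_le hy).trans (hcS hy).2⟩, fun z hz => sInf_le hz⟩)
    I ⟨hI, le_refl I⟩
  exact ⟨M, hMS.1, hMS.2, fun J hJp hJM =>
    le_antisymm hJM (hMmin J ⟨hJp, hJM.trans hMS.2⟩ hJM)⟩
end

section
/- The intersection of a nonempty chain (totally ordered family under inclusion) of primal ideals of a ring A is a primal ideal. -/
private lemma aux7 {A : Type*} [NonUnitalRing A] (C : Set (TwoSidedIdeal A))
    (hne : C.Nonempty) (hchain : IsChain (· ≤ ·) C) :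
    ∀ L : List (TwoSidedIdeal A), (∀ J ∈ L, ∃ I ∈ C, ¬ J ≤ I) →
      ∃ I ∈ C, ∀ J ∈ L, ¬ J ≤ I := by
  intro L
  induction L with
  | nil => exact fun _ => ⟨hne.choose, hne.choose_spec, by simp⟩
  | cons J L ih =>
    intro h
    obtain ⟨I₁, hI₁, hJ₁⟩ := h J (List.mem_cons_self (a := J) (l := L))
    obtain ⟨I₂, hI₂, hL⟩ := ih (fun J' hJ' => h J' (List.mem_cons_of_mem _ hJ'))
    rcases eq_or_ne I₁ I₂ with rfl | hne'
    · exact ⟨I₁, hI₁, fun J' hJ' => by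
        rcases List.mem_cons.1 hJ' with rfl | hm
        · exact hJ₁
        · exact hL _ hm⟩
    rcases hchain hI₁ hI₂ hne' with h12 | h21
    · refine ⟨I₁, hI₁, fun J' hJ' => ?_⟩
      rcases List.mem_cons.1 hJ' with rfl | hm
      · exact hJ₁
      · exact fun hle => hL _ hm (hle.trans h12)
    · refine ⟨I₂, hI₂, fun J' hJ' => ?_⟩
      rcases List.mem_cons.1 hJ' with rfl | hm
      · exact fun hle => hJ₁ (hle.trans h21)
      · exact hL _ hm

/-- The intersection of a nonempty chain of primal ideals of a ring is a primal ideal. -/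
theorem stmt7 {A : Type*} [NonUnitalRing A] (C : Set (TwoSidedIdeal A))
    (hne : C.Nonempty) (hchain : IsChain (· ≤ ·) C)
    (hprimal : ∀ I ∈ C, IsPrimalIdeal I) :
    IsPrimalIdeal (sInf C) := by
  intro L hlen hprod
  by_contra hcon
  push_neg at hcon
  have h : ∀ J ∈ L, ∃ I ∈ C, ¬ J ≤ I := by
    intro J hJ
    have := hcon J hJ
    rw [le_sInf_iff] at this
    push_neg at this
    exact this
  obtain ⟨I, hIC, hall⟩ := aux7 C hne hchain L h
  obtain ⟨J, hJL, hJI⟩ := hprimal I hIC L hlen hprod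
  exact hall J hJL hJI
end

section
/- Let A be a C*-algebra and let S be a set of closed two-sided ideals of A such that each quotient A/I is unital. Equip S with the topology where a net I_α → I iff ‖θ_{I_α}(a)‖ → ‖θ_I(a)‖ for all a ∈ A. Then for each λ ∈ ℂ and a ∈ A, the function I ↦ ‖λ·1_I + θ_I(a)‖ on S is lower semicontinuous. -/
open scoped CStarAlgebra

/-- Clamp function to [-1,1]. -/
private noncomputable def clampf : ℝ → ℝ := fun t => max (-1) (min 1 t)

private lemma clampf_cont : Continuous clampf := by
  unfold clampf; fun_prop

private lemma clampf_zero : clampf 0 = 0 := by norm_num [clampf]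

private lemma clampf_one : clampf 1 = 1 := by norm_num [clampf]

private lemma clampf_abs_le (t : ℝ) : ‖clampf t‖ ≤ 1 := by
  rw [Real.norm_eq_abs, abs_le]
  constructor
  · exact le_max_left _ _
  · exact max_le (by norm_num) (min_le_left _ _)

/-- A surjective star hom onto a unital C*-algebra admits a contractive preimage of `1`. -/
private lemma exists_lift_one {A : Type*} [NonUnitalCStarAlgebra A]
    {B : Type*} [CStarAlgebra B] (π : A →⋆ₙₐ[ℂ] B) (hsurj : Function.Surjective π) :
    ∃ d : A, ‖d‖ ≤ 1 ∧ π d = 1 := by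
  obtain ⟨c₀, hc₀⟩ := hsurj 1
  set c : A := (2⁻¹ : ℂ) • (c₀ + star c₀) with hc
  have hcsa : IsSelfAdjoint c := by
    rw [IsSelfAdjoint, hc, star_smul, star_add, star_star]
    simp [add_comm, Complex.star_def, Complex.conj_ofReal]
  have hπc : π c = 1 := by
    rw [hc, map_smul, map_add, map_star, hc₀, star_one, ← two_smul ℂ (1 : B), smul_smul]
    norm_num
  refine ⟨cfcₙ clampf c, ?_, ?_⟩
  · exact norm_cfcₙ_le fun x _ => clampf_abs_le x
  · have hcont : Continuous π := map_continuous π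
    rw [NonUnitalStarAlgHom.map_cfcₙ π clampf c clampf_cont.continuousOn clampf_zero hcont,
      hπc]
    rcases subsingleton_or_nontrivial B with h | h
    · exact Subsingleton.elim _ _
    · rw [cfcₙ_eq_cfc clampf_cont.continuousOn clampf_zero]
      calc cfc clampf (1 : B) = cfc (fun _ : ℝ => (1 : ℝ)) (1 : B) := by
            refine cfc_congr fun x hx => ?_
            rw [spectrum.one_eq] at hx
            rw [Set.mem_singleton_iff] at hx
            rw [hx, clampf_one]
        _ = 1 := cfc_const_one ℝ 1

/-- Let `A` be a C*-algebra and `S` a set of closed two-sided ideals with unital quotients,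
realized by surjective star homomorphisms `π s : A → B s` onto unital C*-algebras.  `S`
carries a topology in which the functions `s ↦ ‖π s a‖` are continuous (nets converge iff
the quotient norms converge).  Then for each `λ ∈ ℂ` and `a ∈ A` the function
`s ↦ ‖λ·1 + π s a‖` is lower semicontinuous on `S`. -/
theorem stmt9 {A : Type*} [NonUnitalCStarAlgebra A]
    {S : Type*} [TopologicalSpace S]
    (B : S → Type*) [∀ s, CStarAlgebra (B s)]
    (π : ∀ s, A →⋆ₙₐ[ℂ] B s) (hsurj : ∀ s, Function.Surjective (π s))
    (htop : ∀ a : A, Continuous fun s => ‖π s a‖)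
    (lam : ℂ) (a : A) :
    LowerSemicontinuous fun s => ‖lam • (1 : B s) + π s a‖ := by
  intro s y hy
  obtain ⟨d, hd1, hdπ⟩ := exists_lift_one (π s) (hsurj s)
  set b : A := lam • d + a * d with hb
  have key : ∀ s', ‖π s' b‖ ≤ ‖lam • (1 : B s') + π s' a‖ := by
    intro s'
    have : π s' b = (lam • (1 : B s') + π s' a) * π s' d := by
      rw [hb, map_add, map_smul, map_mul, add_mul, smul_mul_assoc, one_mul]
    rw [this]
    calc ‖(lam • (1 : B s') + π s' a) * π s' d‖
        ≤ ‖lam • (1 : B s') + π s' a‖ * ‖π s' d‖ := norm_mul_le _ _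
      _ ≤ ‖lam • (1 : B s') + π s' a‖ * 1 := by
          gcongr
          exact (NonUnitalStarAlgHom.norm_apply_le (π s') d).trans hd1
      _ = _ := mul_one _
  have heq : ‖π s b‖ = ‖lam • (1 : B s) + π s a‖ := by
    rw [hb, map_add, map_smul, map_mul, hdπ, mul_one]
  have hy' : y < ‖π s b‖ := by rw [heq]; exact hy
  have hev : ∀ᶠ s' in nhds s, y < ‖π s' b‖ :=
    ContinuousAt.eventually_lt continuousAt_const (htop b).continuousAt hy'
  exact hev.mono fun s' h => lt_of_lt_of_le h (key s')
end

section
/- Let X be a topological space in which the points P₁, P₂, … , together with points Qₙ, Rₙ, Sₙ, Tₙ, Uₙ, Vₙ, Wₙ (n ≥ 1), have closures: cl{Pₙ} = {Pₙ}, cl{Qₙ} = {Qₙ,Pₙ}, cl{Rₙ} = {Rₙ,Pₙ,Sₙ,Tₙ}, cl{Sₙ} = {Sₙ}, cl{Tₙ} = {Tₙ}, cl{Uₙ} = {Uₙ,Tₙ}, cl{Vₙ} = {Vₙ,Tₙ,Wₙ,Pₙ₊₁}, cl{Wₙ} = {Wₙ}, and suppose X is the union of all these points. Then every continuous function f : X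 → ℝ is constant. -/
/-- Let `X` be a topological space whose points are `Pₙ, Qₙ, Rₙ, Sₙ, Tₙ, Uₙ, Vₙ, Wₙ`
(`n ∈ ℕ`) with closures of singletons as specified.  Then every continuous real-valued
function on `X` is constant. -/
theorem stmt17 {X : Type*} [TopologicalSpace X]
    (P Q R S T U V W : ℕ → X)
    (hsurj : ∀ x : X, ∃ n : ℕ, x = P n ∨ x = Q n ∨ x = R n ∨ x = S n ∨
      x = T n ∨ x = U n ∨ x = V n ∨ x = W n)
    (hP : ∀ n, closure {P n} = {P n})
    (hQ : ∀ n, closure {Q n} = {Q n, P n})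
    (hR : ∀ n, closure {R n} = {R n, P n, S n, T n})
    (hS : ∀ n, closure {S n} = {S n})
    (hT : ∀ n, closure {T n} = {T n})
    (hU : ∀ n, closure {U n} = {U n, T n})
    (hV : ∀ n, closure {V n} = {V n, T n, W n, P (n + 1)})
    (hW : ∀ n, closure {W n} = {W n})
    (f : X → ℝ) (hf : Continuous f) :
    ∀ x y : X, f x = f y := by
  have key : ∀ a b : X, b ∈ closure {a} → f b = f a := by
    intro a b hb
    have hsub : closure {a} ⊆ f ⁻¹' {f a} :=
      closure_minimal (by simp) (IsClosed.preimage hf isClosed_singleton)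
    exact hsub hb
  have fR : ∀ n, f (P n) = f (R n) := fun n => key _ _ (by rw [hR]; simp)
  have fQ : ∀ n, f (Q n) = f (P n) := fun n => (key _ _ (by rw [hQ]; simp)).symm
  have fS : ∀ n, f (S n) = f (P n) := fun n =>
    (key (R n) (S n) (by rw [hR]; simp)).trans (fR n).symm
  have fT : ∀ n, f (T n) = f (P n) := fun n =>
    (key (R n) (T n) (by rw [hR]; simp)).trans (fR n).symm
  have fU : ∀ n, f (U n) = f (P n) := fun n =>
    ((key (U n) (T n) (by rw [hU]; simp)).symm).trans (fT n)
  have fV : ∀ n, f (V n) = f (P n) := fun n =>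
    ((key (V n) (T n) (by rw [hV]; simp)).symm).trans (fT n)
  have fW : ∀ n, f (W n) = f (P n) := fun n =>
    (key (V n) (W n) (by rw [hV]; simp)).trans (fV n)
  have fstep : ∀ n, f (P (n + 1)) = f (P n) := fun n =>
    (key (V n) (P (n + 1)) (by rw [hV]; simp)).trans (fV n)
  have fPn : ∀ n, f (P n) = f (P 0) := by
    intro n
    induction n with
    | zero => rfl
    | succ k ih => rw [fstep k, ih]
  have fall : ∀ x : X, f x = f (P 0) := by
    intro x
    obtain ⟨n, h⟩ := hsurj x
    rcases h with h | h | h | h | h | h | h | h <;> subst h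
    · exact fPn n
    · rw [fQ, fPn]
    · rw [← fR, fPn]
    · rw [fS, fPn]
    · rw [fT, fPn]
    · rw [fU, fPn]
    · rw [fV, fPn]
    · rw [fW, fPn]
  intro x y
  rw [fall x, fall y]
end
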